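/- Let p be a prime with p > 2 and let K be an algebraically closed field of characteristic p. Let J ⊂ K[A,B,C,D] be the ideal generated by A^p, B^p, C^p, D^p together with the elements (m·A + n·B)^{p−1}·(m·C + n·D)^{p−1} and (m·A + n·C)^{p−1}·(m·B + n·D)^{p−1} for all (m,n) ∈ 𝔽_p² with (m,n) ≠ (0,0). Then there exists a matrix M ∈ GL₂(K) such that the K-algebra endomorphism σ_M of K[A,B,C,D] given by A ↦ M₁₁A + M₂₁B, B ↦ M₁₂A + M₂₂B, C ↦ M₁₁C + M₂₁D, D ↦ M₁₂C + M₂₂D does not preserve J, i.e. the image ideal of J under σ_M is different from J. (Consequently the full level structure on α_p × α_p over K is not invariant under all group scheme automorphisms of α_p × α_p, and there is no notion of full level structure over the stack OT × OT of products of two Oort–Tate group schemes.) -/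

import Mathlib

open MvPolynomial

set_option synthInstance.maxHeartbeats 1000000
set_option maxHeartbeats 1000000

namespace Stmt17Aux

variable {K : Type} [Field K]

lemma deg4 (d : Fin 4 →₀ ℕ) : d.degree = d 0 + d 1 + d 2 + d 3 := by
  rw [Finsupp.degree_apply,
    Finset.sum_subset (Finset.subset_univ d.support)
      (fun i _ h => Finsupp.notMem_support_iff.mp h)]
  rw [Fin.sum_univ_four]

lemma expand (a b : K) (i j : Fin 4) (m : ℕ) :
    (C a * X i + C b * X j) ^ m =
      ∑ k ∈ Finset.range (m + 1),
        monomial (Finsupp.single i k + Finsupp.single j (m - k))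
          (a ^ k * b ^ (m - k) * (m.choose k : K)) := by
  rw [add_pow]
  refine Finset.sum_congr rfl fun k hk => ?_
  rw [mul_pow, mul_pow, ← C_pow, ← C_pow, X_pow_eq_monomial, X_pow_eq_monomial]
  rw [show ((m.choose k : ℕ) : MvPolynomial (Fin 4) K) = C ((m.choose k : ℕ) : K) by
    simp [map_natCast]]
  rw [C_mul_monomial, C_mul_monomial, monomial_mul, mul_comm _ (C ((m.choose k : ℕ) : K)),
    C_mul_monomial]
  congr 1
  ring

lemma coeff_expand_mul (a b a' b' : K) (i j i' j' : Fin 4) (m : ℕ) (μ : Fin 4 →₀ ℕ) :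
    coeff μ ((C a * X i + C b * X j) ^ m * (C a' * X i' + C b' * X j') ^ m) =
      ∑ k ∈ Finset.range (m + 1), ∑ l ∈ Finset.range (m + 1),
        if Finsupp.single i k + Finsupp.single j (m - k) +
            (Finsupp.single i' l + Finsupp.single j' (m - l)) = μ
        then a ^ k * b ^ (m - k) * (m.choose k : K) *
             (a' ^ l * b' ^ (m - l) * (m.choose l : K)) else 0 := by
  rw [expand a b i j m, expand a' b' i' j' m, Finset.sum_mul_sum]
  rw [coeff_sum]
  refine Finset.sum_congr rfl fun k hk => ?_
  rw [coeff_sum]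
  refine Finset.sum_congr rfl fun l hl => ?_
  rw [monomial_mul, coeff_monomial]

end Stmt17Aux

namespace Stmt17Aux2
open Stmt17Aux

variable {K : Type} [Field K]

noncomputable def mu1 (n : ℕ) : Fin 4 →₀ ℕ :=
  Finsupp.single 0 n + Finsupp.single 2 1 + Finsupp.single 3 (n - 1)

noncomputable def mu2 (n : ℕ) : Fin 4 →₀ ℕ :=
  Finsupp.single 0 1 + Finsupp.single 1 (n - 1) + Finsupp.single 3 n

@[simp] lemma mu1_apply_0 (n : ℕ) : mu1 n 0 = n := by
  simp [mu1, Finsupp.single_apply]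
@[simp] lemma mu1_apply_1 (n : ℕ) : mu1 n 1 = 0 := by
  simp [mu1, Finsupp.single_apply]
@[simp] lemma mu1_apply_2 (n : ℕ) : mu1 n 2 = 1 := by
  simp [mu1, Finsupp.single_apply]
@[simp] lemma mu1_apply_3 (n : ℕ) : mu1 n 3 = n - 1 := by
  simp [mu1, Finsupp.single_apply]
@[simp] lemma mu2_apply_0 (n : ℕ) : mu2 n 0 = 1 := by
  simp [mu2, Finsupp.single_apply]
@[simp] lemma mu2_apply_1 (n : ℕ) : mu2 n 1 = n - 1 := by
  simp [mu2, Finsupp.single_apply]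
@[simp] lemma mu2_apply_2 (n : ℕ) : mu2 n 2 = 0 := by
  simp [mu2, Finsupp.single_apply]
@[simp] lemma mu2_apply_3 (n : ℕ) : mu2 n 3 = n := by
  simp [mu2, Finsupp.single_apply]

lemma coeff_f_mu1 (a b : K) (n : ℕ) (hn : 2 ≤ n) :
    coeff (mu1 n) ((C a * X 0 + C b * X 1) ^ n * (C a * X 2 + C b * X 3) ^ n)
      = a ^ (n + 1) * b ^ (n - 1) * (n : K) := by
  rw [coeff_expand_mul]
  rw [Finset.sum_eq_single n]
  · rw [Finset.sum_eq_single 1]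
    · rw [if_pos]
      · simp [Nat.sub_self, Nat.choose_one_right, pow_succ]
        ring
      · ext c
        fin_cases c <;>
          simp [mu1, Finsupp.single_apply, Nat.sub_self]
    · intro l hl hlne
      rw [if_neg]
      intro h
      have h2 := DFunLike.congr_fun h (2 : Fin 4)
      simp [mu1, Finsupp.single_apply] at h2
      exact hlne h2
    · intro h
      exact absurd (Finset.mem_range.mpr (by omega)) h
  · intro k hk hkne
    refine Finset.sum_eq_zero fun l hl => ?_
    rw [if_neg]
    intro h
    have h0 := DFunLike.congr_fun h (0 : Fin 4)
    simp [mu1, Finsupp.single_apply] at h0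
    exact hkne h0
  · intro h
    exact absurd (Finset.mem_range.mpr (by omega)) h

lemma coeff_f_mu2 (a b : K) (n : ℕ) (hn : 2 ≤ n) :
    coeff (mu2 n) ((C a * X 0 + C b * X 1) ^ n * (C a * X 2 + C b * X 3) ^ n)
      = a * b ^ (n - 1) * b ^ n * (n : K) := by
  rw [coeff_expand_mul]
  rw [Finset.sum_eq_single 1]
  · rw [Finset.sum_eq_single 0]
    · rw [if_pos]
      · simp [Nat.sub_zero, Nat.choose_one_right]
        ring
      · ext c
        fin_cases c <;>
          simp [mu2, Finsupp.single_apply, Nat.sub_zero]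
    · intro l hl hlne
      rw [if_neg]
      intro h
      have h2 := DFunLike.congr_fun h (2 : Fin 4)
      simp [mu2, Finsupp.single_apply] at h2
      exact hlne h2
    · intro h
      exact absurd (Finset.mem_range.mpr (by omega)) h
  · intro k hk hkne
    refine Finset.sum_eq_zero fun l hl => ?_
    rw [if_neg]
    intro h
    have h0 := DFunLike.congr_fun h (0 : Fin 4)
    simp [mu2, Finsupp.single_apply] at h0
    exact hkne h0
  · intro h
    exact absurd (Finset.mem_range.mpr (by omega)) h

lemma coeff_g_mu1 (a b : K) (n : ℕ) (hn : 2 ≤ n) :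
    coeff (mu1 n) ((C a * X 0 + C b * X 2) ^ n * (C a * X 1 + C b * X 3) ^ n)
      = 0 := by
  rw [coeff_expand_mul]
  refine Finset.sum_eq_zero fun k hk => Finset.sum_eq_zero fun l hl => ?_
  rw [if_neg]
  intro h
  have h0 := DFunLike.congr_fun h (0 : Fin 4)
  have h2 := DFunLike.congr_fun h (2 : Fin 4)
  simp [mu1, Finsupp.single_apply] at h0 h2
  omega

lemma coeff_g_mu2 (a b : K) (n : ℕ) (hn : 2 ≤ n) :
    coeff (mu2 n) ((C a * X 0 + C b * X 2) ^ n * (C a * X 1 + C b * X 3) ^ n)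
      = 0 := by
  rw [coeff_expand_mul]
  refine Finset.sum_eq_zero fun k hk => Finset.sum_eq_zero fun l hl => ?_
  rw [if_neg]
  intro h
  have h0 := DFunLike.congr_fun h (0 : Fin 4)
  have h2 := DFunLike.congr_fun h (2 : Fin 4)
  simp [mu2, Finsupp.single_apply] at h0 h2
  omega

end Stmt17Aux2

namespace Stmt17Aux3
open Stmt17Aux Stmt17Aux2

variable {K : Type} [Field K]

lemma degree_add4 (u v : Fin 4 →₀ ℕ) : (u + v).degree = u.degree + v.degree := by
  rw [deg4, deg4, deg4]
  simp only [Finsupp.add_apply]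
  ring

lemma coeff_mul_homog (q z : MvPolynomial (Fin 4) K) (d : ℕ) (hz : z.IsHomogeneous d)
    (μ : Fin 4 →₀ ℕ) (hd : μ.degree = d) :
    coeff μ (q * z) = coeff 0 q * coeff μ z := by
  rw [coeff_mul]
  rw [Finset.sum_eq_single ((0 : Fin 4 →₀ ℕ), μ)]
  · rintro ⟨u, v⟩ huv hne
    rw [Finset.HasAntidiagonal.mem_antidiagonal] at huv
    by_cases hv : v.degree = d
    · have hu : u = 0 := by
        have h1 : u.degree + v.degree = μ.degree := by rw [← huv, degree_add4]
        have h2 : u.degree = 0 := by omega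
        rwa [Finsupp.degree_eq_zero_iff] at h2
      subst hu
      rw [zero_add] at huv
      exact absurd (by rw [Prod.mk.injEq]; exact ⟨rfl, huv⟩ : (0, v) = ((0 : Fin 4 →₀ ℕ), μ)) hne
    · rw [hz.coeff_eq_zero hv, mul_zero]
  · intro h
    exact absurd (Finset.HasAntidiagonal.mem_antidiagonal.mpr (zero_add μ)) h

lemma homog_factor (a b : K) (i j : Fin 4) (m : ℕ) :
    ((C a * X i + C b * X j) ^ m).IsHomogeneous m := by
  have h : (C a * X i + C b * X j).IsHomogeneous 1 :=
    ((isHomogeneous_X K i).C_mul a).add ((isHomogeneous_X K j).C_mul b)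
  simpa using h.pow m

lemma homog_prod (a b : K) (i j i' j' : Fin 4) (m : ℕ) :
    ((C a * X i + C b * X j) ^ m * (C a * X i' + C b * X j') ^ m).IsHomogeneous (m + m) :=
  (homog_factor a b i j m).mul (homog_factor a b i' j' m)

lemma mu1_degree (n : ℕ) (hn : 2 ≤ n) : (mu1 n).degree = n + n := by
  rw [deg4]
  simp only [mu1_apply_0, mu1_apply_1, mu1_apply_2, mu1_apply_3]
  omega

lemma mu2_degree (n : ℕ) (hn : 2 ≤ n) : (mu2 n).degree = n + n := by
  rw [deg4]
  simp only [mu2_apply_0, mu2_apply_1, mu2_apply_2, mu2_apply_3]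
  omega

end Stmt17Aux3

namespace Stmt17Aux4
open Stmt17Aux Stmt17Aux2 Stmt17Aux3

variable {K : Type} [Field K]

lemma vanish (a b : K) (n : ℕ) (hn : 2 ≤ n) (ha : a ^ (n + 1) = a) (hb : b ^ (n + 1) = b) :
    a ^ (n + 1) * b ^ (n - 1) * (n : K) = a * b ^ (n - 1) * b ^ n * (n : K) := by
  rw [ha]
  rcases eq_or_ne b 0 with rfl | hb0
  · rw [zero_pow (by omega : n - 1 ≠ 0)]
    ring
  · have hbn : b ^ n = 1 := by
      have h1 : b ^ n * b = 1 * b := by rw [one_mul, ← pow_succ]; exact hb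
      exact mul_right_cancel₀ hb0 h1
    rw [hbn]
    ring

end Stmt17Aux4

open Stmt17Aux Stmt17Aux2 Stmt17Aux3 Stmt17Aux4

/-- For `p > 2` and `K` algebraically closed of characteristic `p`, the defining
ideal `J` of the full level structure on `α_p × α_p` is *not* invariant under
all of `GL₂(K)` acting by right multiplication on the variable matrix
`(A, B; C, D)`: there is `M ∈ GL₂(K)` whose substitution `σ_M` does not
preserve `J`.  Consequently there is no full level structure over the stack
`OT × OT`. -/
theorem stmt17 (p : ℕ) [Fact p.Prime] (hp2 : 2 < p)
    (K : Type) [Field K] [IsAlgClosed K] [CharP K p]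
    (φ : ZMod p →+* K) (hφ : φ = ZMod.castHom (dvd_refl p) K)
    (J : Ideal (MvPolynomial (Fin 4) K))
    (hJ : J = Ideal.span {z : MvPolynomial (Fin 4) K |
      (∃ i : Fin 4, z = X i ^ p) ∨
      (∃ m n : ZMod p, (m ≠ 0 ∨ n ≠ 0) ∧
        (z = (C (φ m) * X 0 + C (φ n) * X 1) ^ (p - 1) *
             (C (φ m) * X 2 + C (φ n) * X 3) ^ (p - 1) ∨
         z = (C (φ m) * X 0 + C (φ n) * X 2) ^ (p - 1) *
             (C (φ m) * X 1 + C (φ n) * X 3) ^ (p - 1)))}) :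
    ∃ M : GL (Fin 2) K,
      Ideal.map (MvPolynomial.aeval
        ![C (M.val 0 0) * X 0 + C (M.val 1 0) * X 1,
          C (M.val 0 1) * X 0 + C (M.val 1 1) * X 1,
          C (M.val 0 0) * X 2 + C (M.val 1 0) * X 3,
          C (M.val 0 1) * X 2 + C (M.val 1 1) * X 3] :
            MvPolynomial (Fin 4) K →ₐ[K] MvPolynomial (Fin 4) K).toRingHom J ≠ J := by
  classical
  have hp : p.Prime := Fact.out
  have hn2 : 2 ≤ p - 1 := by omega
  have hnp : p - 1 + 1 = p := by omega
  -- a root of X^p - X - 1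
  have hdeg : (Polynomial.X ^ p - (Polynomial.X + 1) : Polynomial K).degree ≠ 0 := by
    have h1 : (Polynomial.X + 1 : Polynomial K).degree < (Polynomial.X ^ p : Polynomial K).degree := by
      rw [Polynomial.degree_X_pow]
      refine lt_of_le_of_lt (Polynomial.degree_add_le _ _) ?_
      have : max (Polynomial.X : Polynomial K).degree (1 : Polynomial K).degree ≤ 1 := by
        simp [Polynomial.degree_X, Polynomial.degree_one]
      refine lt_of_le_of_lt this ?_
      exact_mod_cast (by omega : (1 : ℕ) < p)
    rw [Polynomial.degree_sub_eq_left_of_degree_lt h1, Polynomial.degree_X_pow]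
    exact_mod_cast hp.ne_zero
  obtain ⟨t, ht0⟩ := IsAlgClosed.exists_root
    (Polynomial.X ^ p - (Polynomial.X + 1) : Polynomial K) hdeg
  have ht : t ^ p = t + 1 := by
    have h := ht0
    rw [Polynomial.IsRoot, Polynomial.eval_sub, Polynomial.eval_pow, Polynomial.eval_add,
      Polynomial.eval_X, Polynomial.eval_one, sub_eq_zero] at h
    exact h
  -- the matrix
  refine ⟨⟨!![1, t; 0, 1], !![1, -t; 0, 1], ?_, ?_⟩, ?_⟩
  · ext i j
    fin_cases i <;> fin_cases j <;>
      simp [Matrix.mul_apply, Fin.sum_univ_two, Matrix.one_apply]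
  · ext i j
    fin_cases i <;> fin_cases j <;>
      simp [Matrix.mul_apply, Fin.sum_univ_two, Matrix.one_apply]
  intro hEq
  set σ := (MvPolynomial.aeval
        ![C ((!![1, t; 0, 1] : Matrix (Fin 2) (Fin 2) K) 0 0) * X 0 +
            C ((!![1, t; 0, 1] : Matrix (Fin 2) (Fin 2) K) 1 0) * X 1,
          C ((!![1, t; 0, 1] : Matrix (Fin 2) (Fin 2) K) 0 1) * X 0 +
            C ((!![1, t; 0, 1] : Matrix (Fin 2) (Fin 2) K) 1 1) * X 1,
          C ((!![1, t; 0, 1] : Matrix (Fin 2) (Fin 2) K) 0 0) * X 2 +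
            C ((!![1, t; 0, 1] : Matrix (Fin 2) (Fin 2) K) 1 0) * X 3,
          C ((!![1, t; 0, 1] : Matrix (Fin 2) (Fin 2) K) 0 1) * X 2 +
            C ((!![1, t; 0, 1] : Matrix (Fin 2) (Fin 2) K) 1 1) * X 3] :
            MvPolynomial (Fin 4) K →ₐ[K] MvPolynomial (Fin 4) K) with hσ
  -- the generator B^{p-1} D^{p-1} is in J
  have hgen : ((X 1 : MvPolynomial (Fin 4) K) ^ (p - 1) * X 3 ^ (p - 1)) ∈ J := by
    rw [hJ]
    apply Ideal.subset_span
    refine Or.inr ⟨0, 1, Or.inr one_ne_zero, Or.inl ?_⟩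
    simp
  have hmem1 : σ ((X 1 : MvPolynomial (Fin 4) K) ^ (p - 1) * X 3 ^ (p - 1)) ∈
      Ideal.map σ.toRingHom J := Ideal.mem_map_of_mem _ hgen
  rw [hEq] at hmem1
  -- compute the image
  have himg : σ ((X 1 : MvPolynomial (Fin 4) K) ^ (p - 1) * X 3 ^ (p - 1)) =
      (C t * X 0 + C 1 * X 1) ^ (p - 1) * (C t * X 2 + C 1 * X 3) ^ (p - 1) := by
    rw [hσ]
    simp [Matrix.cons_val_one, Matrix.head_cons, Matrix.cons_val_zero]
  rw [himg, hJ] at hmem1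
  -- extract a finite combination
  obtain ⟨c, hcs, hsum⟩ := Submodule.mem_span_set.mp hmem1
  -- the functional kills every multiple of a generator
  have hzero : ∀ z ∈ {z : MvPolynomial (Fin 4) K |
      (∃ i : Fin 4, z = X i ^ p) ∨
      (∃ m n : ZMod p, (m ≠ 0 ∨ n ≠ 0) ∧
        (z = (C (φ m) * X 0 + C (φ n) * X 1) ^ (p - 1) *
             (C (φ m) * X 2 + C (φ n) * X 3) ^ (p - 1) ∨
         z = (C (φ m) * X 0 + C (φ n) * X 2) ^ (p - 1) *
             (C (φ m) * X 1 + C (φ n) * X 3) ^ (p - 1)))}, ∀ q : MvPolynomial (Fin 4) K,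
      coeff (mu1 (p - 1)) (q * z) - coeff (mu2 (p - 1)) (q * z) = 0 := by
    rintro z (⟨i, rfl⟩ | ⟨m, n, -, (rfl | rfl)⟩) q
    · -- monomial generators
      have hb : ∀ μ : Fin 4 →₀ ℕ, (∀ cc : Fin 4, μ cc ≤ p - 1) →
          coeff μ (q * X i ^ p) = 0 := by
        intro μ hμ
        rw [X_pow_eq_monomial, coeff_mul_monomial', if_neg]
        intro hle
        have h2 := hle i
        rw [Finsupp.single_apply, if_pos rfl] at h2
        have := hμ i
        omega
      rw [hb _ (fun cc => by fin_cases cc <;> simp <;> omega),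
        hb _ (fun cc => by fin_cases cc <;> simp <;> omega), sub_zero]
    · -- row generators
      have hhom := homog_prod (φ m) (φ n) 0 1 2 3 (p - 1)
      rw [coeff_mul_homog q _ _ hhom _ (mu1_degree _ hn2),
        coeff_mul_homog q _ _ hhom _ (mu2_degree _ hn2),
        coeff_f_mu1 _ _ _ hn2, coeff_f_mu2 _ _ _ hn2]
      have ha : (φ m) ^ (p - 1 + 1) = φ m := by
        rw [hnp, ← map_pow, ZMod.pow_card]
      have hb : (φ n) ^ (p - 1 + 1) = φ n := by
        rw [hnp, ← map_pow, ZMod.pow_card]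
      rw [vanish _ _ _ hn2 ha hb, sub_self]
    · -- column generators
      have hhom := homog_prod (φ m) (φ n) 0 2 1 3 (p - 1)
      rw [coeff_mul_homog q _ _ hhom _ (mu1_degree _ hn2),
        coeff_mul_homog q _ _ hhom _ (mu2_degree _ hn2),
        coeff_g_mu1 _ _ _ hn2, coeff_g_mu2 _ _ _ hn2]
      ring
  -- the functional on the element itself
  have hval : coeff (mu1 (p - 1))
        ((C t * X 0 + C 1 * X 1) ^ (p - 1) * (C t * X 2 + C 1 * X 3) ^ (p - 1)) -
      coeff (mu2 (p - 1))
        ((C t * X 0 + C 1 * X 1) ^ (p - 1) * (C t * X 2 + C 1 * X 3) ^ (p - 1)) =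
      ((p - 1 : ℕ) : K) := by
    rw [coeff_f_mu1 _ _ _ hn2, coeff_f_mu2 _ _ _ hn2, hnp, ht]
    simp
    ring
  have hvanish : coeff (mu1 (p - 1))
        ((C t * X 0 + C 1 * X 1) ^ (p - 1) * (C t * X 2 + C 1 * X 3) ^ (p - 1)) -
      coeff (mu2 (p - 1))
        ((C t * X 0 + C 1 * X 1) ^ (p - 1) * (C t * X 2 + C 1 * X 3) ^ (p - 1)) = 0 := by
    rw [← hsum, Finsupp.sum, coeff_sum, coeff_sum, ← Finset.sum_sub_distrib]
    refine Finset.sum_eq_zero fun z hzs => ?_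
    have hzS := hcs hzs
    simpa [smul_eq_mul] using hzero z hzS (c z)
  rw [hval] at hvanish
  have : ((p - 1 : ℕ) : K) = -1 := by
    rw [Nat.cast_sub hp.one_le, CharP.cast_eq_zero K p]
    ring
  rw [this] at hvanish
  simp at hvanish
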